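/- Let G : [0, c_max] → ℝ be three times differentiable with G(0) = 0 and, for all c ∈ [0, c_max], G'(c) ≥ 0, G''(c) ≤ 0 and G'''(c) ≤ 0. Then the function c ↦ G(c)/c is concave on (0, c_max]. If moreover G(c) > 0 for all c ∈ (0, c_max], then the function c ↦ c/G(c) is convex on (0, c_max]. -/

import Mathlib

open Set

/-- If `G(0) = 0`, `G' ≥ 0`, `G'' ≤ 0` and `G''' ≤ 0` on `[0, c_max]`, then
`c ↦ G(c)/c` is concave on `(0, c_max]`; if moreover `G > 0` on `(0, c_max]`, then
`c ↦ c/G(c)` is convex on `(0, c_max]`. -/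
theorem ratio_concave_and_inv_convex
    (c_max : ℝ) (G G' G'' G''' : ℝ → ℝ)
    (hcmax : 0 < c_max)
    (hG0 : G 0 = 0)
    (hd1 : ∀ c ∈ Icc 0 c_max, HasDerivWithinAt G (G' c) (Icc 0 c_max) c)
    (hd2 : ∀ c ∈ Icc 0 c_max, HasDerivWithinAt G' (G'' c) (Icc 0 c_max) c)
    (hd3 : ∀ c ∈ Icc 0 c_max, HasDerivWithinAt G'' (G''' c) (Icc 0 c_max) c)
    (hG'nonneg : ∀ c ∈ Icc 0 c_max, 0 ≤ G' c)
    (hG''nonpos : ∀ c ∈ Icc 0 c_max, G'' c ≤ 0)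
    (hG'''nonpos : ∀ c ∈ Icc 0 c_max, G''' c ≤ 0) :
    ConcaveOn ℝ (Ioc 0 c_max) (fun c => G c / c) ∧
    ((∀ c ∈ Ioc 0 c_max, 0 < G c) →
      ConvexOn ℝ (Ioc 0 c_max) (fun c => c / G c)) := by
  set φ : ℝ → ℝ := fun c => c ^ 2 * G'' c - 2 * c * G' c + 2 * G c with hφdef
  -- derivatives at interior points of Icc become genuine derivatives
  have hmemnhds : ∀ x ∈ Ioo (0:ℝ) c_max, Icc (0:ℝ) c_max ∈ nhds x := fun x hx =>
    Icc_mem_nhds hx.1 hx.2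
  have hGd : ∀ x ∈ Ioo (0:ℝ) c_max, HasDerivAt G (G' x) x := fun x hx =>
    (hd1 x (Ioo_subset_Icc_self hx)).hasDerivAt (hmemnhds x hx)
  have hG'd : ∀ x ∈ Ioo (0:ℝ) c_max, HasDerivAt G' (G'' x) x := fun x hx =>
    (hd2 x (Ioo_subset_Icc_self hx)).hasDerivAt (hmemnhds x hx)
  have hG''d : ∀ x ∈ Ioo (0:ℝ) c_max, HasDerivAt G'' (G''' x) x := fun x hx =>
    (hd3 x (Ioo_subset_Icc_self hx)).hasDerivAt (hmemnhds x hx)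
  -- φ has derivative x^2 * G''' x at interior points
  have hφd : ∀ x ∈ Ioo (0:ℝ) c_max, HasDerivAt φ (x ^ 2 * G''' x) x := by
    intro x hx
    have h1 : HasDerivAt (fun c : ℝ => c ^ 2) (2 * x) x := by
      simpa using hasDerivAt_pow 2 x
    have h2 := h1.mul (hG''d x hx)
    have h3 := ((hasDerivAt_id x).const_mul (2:ℝ)).mul (hG'd x hx)
    have h4 := (hGd x hx).const_mul (2:ℝ)
    have := (h2.sub h3).add h4
    simp only [id_eq] at this
    exact this.congr_deriv (by ring)
  -- φ is antitone on Icc 0 c_max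
  have hφcont : ContinuousOn φ (Icc 0 c_max) := by
    apply ContinuousOn.add
    apply ContinuousOn.sub
    · exact (continuousOn_pow 2).mul (fun x hx => (hd3 x hx).continuousWithinAt)
    · exact (continuousOn_const.mul continuousOn_id).mul
        (fun x hx => (hd2 x hx).continuousWithinAt)
    · exact continuousOn_const.mul (fun x hx => (hd1 x hx).continuousWithinAt)
  have hintIcc : interior (Icc (0:ℝ) c_max) = Ioo 0 c_max := interior_Icc
  have hφanti : AntitoneOn φ (Icc 0 c_max) := by
    apply antitoneOn_of_deriv_nonpos (convex_Icc 0 c_max) hφcont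
    · rw [hintIcc]
      exact fun x hx => ((hφd x hx).differentiableAt).differentiableWithinAt
    · rw [hintIcc]
      intro x hx
      rw [(hφd x hx).deriv]
      have := hG'''nonpos x (Ioo_subset_Icc_self hx)
      nlinarith [sq_nonneg x]
  have hφ0 : φ 0 = 0 := by simp [hφdef, hG0]
  have hφnonpos : ∀ c ∈ Icc (0:ℝ) c_max, φ c ≤ 0 := by
    intro c hc
    have := hφanti (left_mem_Icc.2 hcmax.le) hc hc.1
    simpa [hφ0] using this
  -- concavity of G c / c on Ioc 0 c_max
  have hintIoc : interior (Ioc (0:ℝ) c_max) = Ioo 0 c_max := interior_Ioc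
  have hconc : ConcaveOn ℝ (Ioc 0 c_max) (fun c => G c / c) := by
    apply concaveOn_of_hasDerivWithinAt2_nonpos (convex_Ioc 0 c_max)
      (f' := fun c => (G' c * c - G c) / c ^ 2) (f'' := fun c => φ c / c ^ 3)
    · have hGc : ContinuousOn G (Icc 0 c_max) := fun x hx => (hd1 x hx).continuousWithinAt
      exact ContinuousOn.div (hGc.mono Ioc_subset_Icc_self)
        continuousOn_id (fun x hx => ne_of_gt hx.1)
    · rw [hintIoc]
      intro x hx
      have hx0 : x ≠ 0 := ne_of_gt hx.1
      have := (hGd x hx).div (hasDerivAt_id x) hx0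
      simp only [id_eq] at this
      have h2 : HasDerivAt (fun c => G c / c) ((G' x * x - G x) / x ^ 2) x := by
        exact this.congr_deriv (by field_simp)
      exact h2.hasDerivWithinAt
    · rw [hintIoc]
      intro x hx
      have hx0 : x ≠ 0 := ne_of_gt hx.1
      have hnum : HasDerivAt (fun c => G' c * c - G c) (G'' x * x) x := by
        have := ((hG'd x hx).mul (hasDerivAt_id x)).sub (hGd x hx)
        simp only [id_eq] at this
        exact this.congr_deriv (by ring)
      have hden : HasDerivAt (fun c : ℝ => c ^ 2) (2 * x) x := by
        simpa using hasDerivAt_pow 2 x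
      have hx2 : x ^ 2 ≠ 0 := pow_ne_zero 2 hx0
      have := hnum.div hden hx2
      have h2 : HasDerivAt (fun c => (G' c * c - G c) / c ^ 2) (φ x / x ^ 3) x := by
        exact this.congr_deriv (by
          field_simp [hφdef]
          ring)
      exact h2.hasDerivWithinAt
    · rw [hintIoc]
      intro x hx
      have h1 := hφnonpos x (Ioo_subset_Icc_self hx)
      have h2 : (0:ℝ) < x ^ 3 := pow_pos hx.1 3
      exact div_nonpos_of_nonpos_of_nonneg h1 h2.le
  refine ⟨hconc, ?_⟩
  intro hGpos
  refine ⟨convex_Ioc 0 c_max, ?_⟩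
  intro x hx y hy a b ha hb hab
  have hz : a • x + b • y ∈ Ioc (0:ℝ) c_max := (convex_Ioc 0 c_max) hx hy ha hb hab
  have hH := hconc.2 hx hy ha hb hab
  simp only [smul_eq_mul] at hH hz ⊢
  set z := a * x + b * y with hzdef
  have hu : 0 < G x / x := div_pos (hGpos x hx) hx.1
  have hv : 0 < G y / y := div_pos (hGpos y hy) hy.1
  have hw : 0 < G z / z := div_pos (hGpos z hz) hz.1
  -- rewrite goals in terms of u := G x / x, etc.
  have hx0 : x ≠ 0 := ne_of_gt hx.1
  have hy0 : y ≠ 0 := ne_of_gt hy.1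
  have hz0 : z ≠ 0 := ne_of_gt hz.1
  have hex : x / G x = (G x / x)⁻¹ := by
    rw [inv_div]
  have hey : y / G y = (G y / y)⁻¹ := by rw [inv_div]
  have hez : z / G z = (G z / z)⁻¹ := by rw [inv_div]
  rw [hex, hey, hez]
  set u := G x / x
  set v := G y / y
  set w := G z / z
  have key : a * u + b * v ≤ w := hH
  have habuv : 0 < a * u + b * v := by
    rcases le_total u v with h | h <;> nlinarith
  have h1 : w⁻¹ ≤ (a * u + b * v)⁻¹ := by
    exact inv_anti₀ habuv key
  have h2 : (a * u + b * v)⁻¹ ≤ a * u⁻¹ + b * v⁻¹ := by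
    rw [inv_le_iff_one_le_mul₀ habuv]
    have expand : (a * u⁻¹ + b * v⁻¹) * (a * u + b * v) =
        a^2 + b^2 + a*b*(u/v + v/u) := by
      field_simp
      ring
    have h3 : 2 ≤ u / v + v / u := by
      rw [div_add_div _ _ (ne_of_gt hv) (ne_of_gt hu), le_div_iff₀ (by positivity)]
      nlinarith [sq_nonneg (u - v)]
    rw [expand]
    nlinarith [mul_nonneg (mul_nonneg ha hb) (by linarith : (0:ℝ) ≤ u / v + v / u - 2)]
  calc w⁻¹ ≤ (a * u + b * v)⁻¹ := h1
    _ ≤ a * u⁻¹ + b * v⁻¹ := h2
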